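/- Let α > 1 and β, γ : ℝ → ℝ be nonnegative functions with β(x) = ∫_{−x}^∞ F(z)(1 − e^{−γ(z)}) dz for all x, and γ(x) = ∫_{−x}^∞ (G(z)/α)(1 − e^{−β(z)}) dz for x < 0, γ constant equal to γ(0) on [0,∞), where F and G are the complementary cdfs defined from the unique positive root w_o of w + e^{-w} = α with γ₀ = w_o e^{w_o}: F(t) = (w_o/α)e^{-t/α} for t ≥ 0, F(t) = 1 − 1/(1+γ₀ e^{-t}) for t < 0; G(t) = α/(1+γ₀ e^t) for t ≥ 0, G(t) = 1 for t < 0. Define η(x) = α F(−x) e^{γ(−x)} + G(x) e^{−β(x)} for x ≥ 0. Then η is nondecreasing on (0, ∞). -/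

import Mathlib

open MeasureTheory

theorem eta_monotone (α w γ₀ : ℝ) (hα : 1 < α) (hw : 0 < w)
    (hwα : w + Real.exp (-w) = α) (hγ₀ : γ₀ = w * Real.exp w)
    (F G : ℝ → ℝ)
    (hF : ∀ t : ℝ, F t = if 0 ≤ t then (w / α) * Real.exp (-t / α)
      else 1 - 1 / (1 + γ₀ * Real.exp (-t)))
    (hG : ∀ t : ℝ, G t = if 0 ≤ t then α / (1 + γ₀ * Real.exp t) else 1)
    (β γ : ℝ → ℝ)
    (hβnn : ∀ x, 0 ≤ β x) (hγnn : ∀ x, 0 ≤ γ x)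
    (hβ : ∀ x : ℝ, β x = ∫ z in Set.Ici (-x), F z * (1 - Real.exp (-γ z)))
    (hγneg : ∀ x : ℝ, x < 0 → γ x = ∫ z in Set.Ici (-x), (G z / α) * (1 - Real.exp (-β z)))
    (hγconst : ∀ x : ℝ, 0 ≤ x → γ x = γ 0)
    (hβ' : ∀ x : ℝ, HasDerivAt β (F (-x) * (1 - Real.exp (-γ (-x)))) x)
    (hγ' : ∀ x : ℝ, x < 0 → HasDerivAt γ ((G (-x) / α) * (1 - Real.exp (-β (-x)))) x)
    (η : ℝ → ℝ)
    (hη : ∀ x : ℝ, η x = α * F (-x) * Real.exp (γ (-x)) + G x * Real.exp (-β x)) :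
    MonotoneOn η (Set.Ioi 0) := by
  have hα0 : (0:ℝ) < α := by linarith
  have hγ₀pos : 0 < γ₀ := by rw [hγ₀]; positivity
  set D : ℝ → ℝ := fun x => α * γ₀ * Real.exp x / (1 + γ₀ * Real.exp x) ^ 2 *
      Real.exp (-β x) * (Real.exp (γ (-x)) - 2 + Real.exp (-γ (-x))) with hD
  have key : ∀ x ∈ Set.Ioi (0:ℝ), HasDerivAt η (D x) x := by
    intro x hx
    simp only [Set.mem_Ioi] at hx
    have hden : (0:ℝ) < 1 + γ₀ * Real.exp x := by positivity
    have hdne := hden.ne'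
    have hFx : F (-x) = 1 - 1 / (1 + γ₀ * Real.exp x) := by
      rw [hF, if_neg (by linarith), neg_neg]
    have hGx : G x = α / (1 + γ₀ * Real.exp x) := by
      rw [hG, if_pos hx.le]
    have hexp : HasDerivAt (fun y => 1 + γ₀ * Real.exp y) (γ₀ * Real.exp x) x := by
      simpa using ((Real.hasDerivAt_exp x).const_mul γ₀).const_add 1
    have hinv := hexp.inv hdne
    have hinv2 : HasDerivAt (fun y => 1 - 1 / (1 + γ₀ * Real.exp y))
        (γ₀ * Real.exp x / (1 + γ₀ * Real.exp x) ^ 2) x := by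
      have h2 := hinv.const_sub 1
      simpa [one_div, neg_div, neg_neg] using h2
    have hγc : HasDerivAt (fun y => γ (-y)) (-(G x / α * (1 - Real.exp (-β x)))) x := by
      have h := (hγ' (-x) (by linarith)).comp x (hasDerivAt_neg x)
      simpa [Function.comp_def, neg_neg, mul_neg_one] using h
    have hE1 := hγc.exp
    have hE2 := ((hβ' x).neg).exp
    have hφ := ((hinv2.mul hE1).const_mul α).add
      (((hinv.const_mul α).mul hE2))
    have hηφ : η =ᶠ[nhds x]
        (fun y => α * ((1 - 1 / (1 + γ₀ * Real.exp y)) * Real.exp (γ (-y))) +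
          α * (1 + γ₀ * Real.exp y)⁻¹ * Real.exp (-β y)) := by
      filter_upwards [eventually_gt_nhds hx] with y hy
      rw [hη, hF, hG, if_neg (by linarith), if_pos hy.le, neg_neg]
      ring
    have hfinal := hφ.congr_of_eventuallyEq hηφ
    refine hfinal.congr_deriv ?_
    simp only [Pi.inv_apply, Pi.neg_apply]
    rw [hFx, hGx, hD]
    field_simp
    ring
  apply monotoneOn_of_deriv_nonneg (convex_Ioi 0)
  · intro x hx
    exact (key x hx).continuousAt.continuousWithinAt
  · intro x hx
    rw [interior_Ioi] at hx
    exact (key x hx).differentiableAt.differentiableWithinAt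
  · intro x hx
    rw [interior_Ioi] at hx
    rw [(key x hx).deriv]
    have h1 := Real.add_one_le_exp (γ (-x))
    have h2 := Real.add_one_le_exp (-γ (-x))
    have hden : (0:ℝ) < 1 + γ₀ * Real.exp x := by positivity
    have hA : 0 ≤ α * γ₀ * Real.exp x / (1 + γ₀ * Real.exp x) ^ 2 := by positivity
    exact mul_nonneg (mul_nonneg hA (Real.exp_pos _).le) (by linarith)
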